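/- arXiv:math/0701846 — 2 statements merged into one kernel-verified Lean document; each statement's English description precedes it below -/
import Mathlib

section
/- The group G generated by α₁, α₂, α₃, β₁, β₂, β₃ subject to the relations α₂ = [β₁⁻¹, β₂⁻¹], β₂ = [β₁, α₂⁻¹], α₁ = [β₁⁻¹, β₃⁻¹], β₁ = [α₁⁻¹, β₃], α₃ = [β₂⁻¹, β₃⁻¹], β₃ = [β₂, α₃⁻¹], together with the commutation relations [α₁, β₁] = 1, [α₁, α₂] = 1, [α₁, β₂] = 1, [α₁, α₃] = 1, [β₁, α₃] = 1, [α₂, β₂] = 1, [α₂, α₃] = 1, [α₂, β₃] = 1, [α₃, β₃] = 1, is the trivial group. -/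
namespace Stmt0

open scoped commutatorElement

/-- The six generators of the free group on 6 letters. -/
def α₁ : FreeGroup (Fin 6) := FreeGroup.of 0
def α₂ : FreeGroup (Fin 6) := FreeGroup.of 1
def α₃ : FreeGroup (Fin 6) := FreeGroup.of 2
def β₁ : FreeGroup (Fin 6) := FreeGroup.of 3
def β₂ : FreeGroup (Fin 6) := FreeGroup.of 4
def β₃ : FreeGroup (Fin 6) := FreeGroup.of 5

/-- Relators of the Section 3 presentation. -/
def rels : Set (FreeGroup (Fin 6)) :=
  { α₂⁻¹ * ⁅β₁⁻¹, β₂⁻¹⁆,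
    β₂⁻¹ * ⁅β₁, α₂⁻¹⁆,
    α₁⁻¹ * ⁅β₁⁻¹, β₃⁻¹⁆,
    β₁⁻¹ * ⁅α₁⁻¹, β₃⁆,
    α₃⁻¹ * ⁅β₂⁻¹, β₃⁻¹⁆,
    β₃⁻¹ * ⁅β₂, α₃⁻¹⁆,
    ⁅α₁, β₁⁆, ⁅α₁, α₂⁆, ⁅α₁, β₂⁆, ⁅α₁, α₃⁆, ⁅β₁, α₃⁆,
    ⁅α₂, β₂⁆, ⁅α₂, α₃⁆, ⁅α₂, β₃⁆, ⁅α₃, β₃⁆ }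

theorem presented_group_trivial : ∀ x : PresentedGroup rels, x = 1 := by
  set π : FreeGroup (Fin 6) →* PresentedGroup rels := PresentedGroup.mk rels with hπ
  have key : ∀ r ∈ rels, π r = 1 := fun r hr =>
    (QuotientGroup.eq_one_iff r).mpr (Subgroup.subset_normalClosure hr)
  set A1 := π α₁ with hA1
  set A2 := π α₂ with hA2
  set A3 := π α₃ with hA3
  set B1 := π β₁ with hB1
  set B2 := π β₂ with hB2
  set B3 := π β₃ with hB3
  -- extract the relations
  have h1 : A2⁻¹ * ⁅B1⁻¹, B2⁻¹⁆ = 1 := by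
    have := key _ (Set.mem_insert _ _)
    simpa using this
  have h2 : B2⁻¹ * ⁅B1, A2⁻¹⁆ = 1 := by
    have := key _ (Set.mem_insert_of_mem _ (Set.mem_insert _ _))
    simpa using this
  have h3 : A1⁻¹ * ⁅B1⁻¹, B3⁻¹⁆ = 1 := by
    have := key _ (Set.mem_insert_of_mem _ (Set.mem_insert_of_mem _ (Set.mem_insert _ _)))
    simpa using this
  have h4 : B1⁻¹ * ⁅A1⁻¹, B3⁆ = 1 := by
    have := key _ (Set.mem_insert_of_mem _ (Set.mem_insert_of_mem _ (Set.mem_insert_of_mem _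
      (Set.mem_insert _ _))))
    simpa using this
  have h5 : A3⁻¹ * ⁅B2⁻¹, B3⁻¹⁆ = 1 := by
    have := key _ (Set.mem_insert_of_mem _ (Set.mem_insert_of_mem _ (Set.mem_insert_of_mem _
      (Set.mem_insert_of_mem _ (Set.mem_insert _ _)))))
    simpa using this
  have h6 : B3⁻¹ * ⁅B2, A3⁻¹⁆ = 1 := by
    have := key _ (Set.mem_insert_of_mem _ (Set.mem_insert_of_mem _ (Set.mem_insert_of_mem _
      (Set.mem_insert_of_mem _ (Set.mem_insert_of_mem _ (Set.mem_insert _ _))))))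
    simpa using this
  have h11 : ⁅B1, A3⁆ = 1 := by
    have := key _ (Set.mem_insert_of_mem _ (Set.mem_insert_of_mem _ (Set.mem_insert_of_mem _
      (Set.mem_insert_of_mem _ (Set.mem_insert_of_mem _ (Set.mem_insert_of_mem _
      (Set.mem_insert_of_mem _ (Set.mem_insert_of_mem _ (Set.mem_insert_of_mem _
      (Set.mem_insert_of_mem _ (Set.mem_insert _ _)))))))))))
    simpa using this
  have h13 : ⁅A2, A3⁆ = 1 := by
    have := key _ (Set.mem_insert_of_mem _ (Set.mem_insert_of_mem _ (Set.mem_insert_of_mem _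
      (Set.mem_insert_of_mem _ (Set.mem_insert_of_mem _ (Set.mem_insert_of_mem _
      (Set.mem_insert_of_mem _ (Set.mem_insert_of_mem _ (Set.mem_insert_of_mem _
      (Set.mem_insert_of_mem _ (Set.mem_insert_of_mem _ (Set.mem_insert_of_mem _
      (Set.mem_insert _ _)))))))))))))
    simpa using this
  -- the derivation
  have cb1a3 : Commute B1 A3 := commutatorElement_eq_one_iff_commute.mp h11
  have ca2a3 : Commute A2 A3 := commutatorElement_eq_one_iff_commute.mp h13
  have hb2 : B2 = B1 * A2⁻¹ * B1⁻¹ * A2 := by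
    simpa [commutatorElement_def] using inv_mul_eq_one.mp h2
  have cb2a3 : Commute B2 A3 := by
    rw [hb2]
    exact ((cb1a3.mul_left ca2a3.inv_left).mul_left cb1a3.inv_left).mul_left ca2a3
  have hB3one : B3 = 1 := by
    have : ⁅B2, A3⁻¹⁆ = 1 := commutatorElement_eq_one_iff_commute.mpr cb2a3.inv_right
    rw [this, mul_one] at h6
    exact inv_eq_one.mp h6
  have hA3one : A3 = 1 := by
    rw [hB3one] at h5
    simp at h5
    exact h5
  have hB1one : B1 = 1 := by
    rw [hB3one] at h4
    simp at h4
    exact h4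
  have hA1one : A1 = 1 := by
    rw [hB1one] at h3
    simp at h3
    exact h3
  have hA2one : A2 = 1 := by
    rw [hB1one] at h1
    simp at h1
    exact h1
  have hB2one : B2 = 1 := by
    rw [hB1one, hA2one] at hb2
    simpa using hb2
  have hgen : ∀ i : Fin 6, π (FreeGroup.of i) = 1 := by
    intro i
    fin_cases i
    · exact hA1one
    · exact hA2one
    · exact hA3one
    · exact hB1one
    · exact hB2one
    · exact hB3one
  have hπ1 : π = 1 := FreeGroup.ext_hom _ _ (by simpa using hgen)
  intro x
  induction x with
  | H z => show π z = 1; rw [hπ1]; rfl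

end Stmt0
end

section
/- The group G generated by a₁, b₁, a₂, b₂, c₁, d₁, c₂, d₂ subject to the relations [b₁⁻¹, d₁⁻¹] = a₁, [a₁⁻¹, d₁] = b₁, [b₂⁻¹, d₂⁻¹] = a₂, [a₂⁻¹, d₂] = b₂, [d₁⁻¹, b₂⁻¹] = c₁, [c₁⁻¹, b₂] = d₁, [d₂⁻¹, b₁⁻¹] = c₂, [c₂⁻¹, b₁] = d₂, the commutation relations [a₁, c₁] = 1, [a₁, c₂] = 1, [a₁, d₂] = 1, [b₁, c₁] = 1, [a₂, c₁] = 1, [a₂, c₂] = 1, [a₂, d₁] = 1, [b₂, c₂] = 1, and the surface relations [a₁, b₁][a₂, b₂] = 1, [c₁, d₁][c₂, d₂] = 1, is a perfect group, i.e., its abelianization is trivial. -/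
namespace Stmt3

open scoped commutatorElement

def a₁ : FreeGroup (Fin 8) := FreeGroup.of 0
def b₁ : FreeGroup (Fin 8) := FreeGroup.of 1
def a₂ : FreeGroup (Fin 8) := FreeGroup.of 2
def b₂ : FreeGroup (Fin 8) := FreeGroup.of 3
def c₁ : FreeGroup (Fin 8) := FreeGroup.of 4
def d₁ : FreeGroup (Fin 8) := FreeGroup.of 5
def c₂ : FreeGroup (Fin 8) := FreeGroup.of 6
def d₂ : FreeGroup (Fin 8) := FreeGroup.of 7

/-- Relators of the Section 4 presentation. -/
def rels : Set (FreeGroup (Fin 8)) :=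
  { ⁅b₁⁻¹, d₁⁻¹⁆ * a₁⁻¹,
    ⁅a₁⁻¹, d₁⁆ * b₁⁻¹,
    ⁅b₂⁻¹, d₂⁻¹⁆ * a₂⁻¹,
    ⁅a₂⁻¹, d₂⁆ * b₂⁻¹,
    ⁅d₁⁻¹, b₂⁻¹⁆ * c₁⁻¹,
    ⁅c₁⁻¹, b₂⁆ * d₁⁻¹,
    ⁅d₂⁻¹, b₁⁻¹⁆ * c₂⁻¹,
    ⁅c₂⁻¹, b₁⁆ * d₂⁻¹,
    ⁅a₁, c₁⁆, ⁅a₁, c₂⁆, ⁅a₁, d₂⁆, ⁅b₁, c₁⁆,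
    ⁅a₂, c₁⁆, ⁅a₂, c₂⁆, ⁅a₂, d₁⁆, ⁅b₂, c₂⁆,
    ⁅a₁, b₁⁆ * ⁅a₂, b₂⁆, ⁅c₁, d₁⁆ * ⁅c₂, d₂⁆ }

/-- The presented group is perfect: its abelianization is trivial. -/
theorem presented_group_perfect :
    ∀ x : Abelianization (PresentedGroup rels), x = 1 := by
  set φ : FreeGroup (Fin 8) →* Abelianization (PresentedGroup rels) :=
    (Abelianization.of).comp (QuotientGroup.mk' (Subgroup.normalClosure rels)) with hφdef
  have hrel : ∀ r ∈ rels, φ r = 1 := by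
    intro r hr
    simp only [hφdef, MonoidHom.comp_apply]
    have : (QuotientGroup.mk' (Subgroup.normalClosure rels)) r = 1 := by
      rw [QuotientGroup.mk'_apply, QuotientGroup.eq_one_iff]
      exact Subgroup.subset_normalClosure hr
    exact (congrArg Abelianization.of this).trans (map_one (Abelianization.of : PresentedGroup rels →* _))
  have hcomm : ∀ x y : FreeGroup (Fin 8), φ ⁅x, y⁆ = 1 := by
    intro x y
    rw [map_commutatorElement]
    exact commutatorElement_eq_one_iff_commute.mpr (mul_comm _ _)
  have h : ∀ x y g : FreeGroup (Fin 8), φ (⁅x, y⁆ * g⁻¹) = 1 → φ g = 1 := by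
    intro x y g hg
    rw [map_mul, hcomm, one_mul, map_inv, inv_eq_one] at hg
    exact hg
  have ha1 : φ a₁ = 1 := h b₁⁻¹ d₁⁻¹ _ (hrel _ (show _ ∈ rels from Or.inl rfl))
  have hb1 : φ b₁ = 1 := h a₁⁻¹ d₁ _ (hrel _ (show _ ∈ rels from Or.inr (Or.inl rfl)))
  have ha2 : φ a₂ = 1 := h b₂⁻¹ d₂⁻¹ _ (hrel _ (show _ ∈ rels from Or.inr (Or.inr (Or.inl rfl))))
  have hb2 : φ b₂ = 1 := h a₂⁻¹ d₂ _ (hrel _ (show _ ∈ rels from Or.inr (Or.inr (Or.inr (Or.inl rfl)))))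
  have hc1 : φ c₁ = 1 := h d₁⁻¹ b₂⁻¹ _ (hrel _ (show _ ∈ rels from Or.inr (Or.inr (Or.inr (Or.inr (Or.inl rfl))))))
  have hd1 : φ d₁ = 1 := h c₁⁻¹ b₂ _ (hrel _ (show _ ∈ rels from Or.inr (Or.inr (Or.inr (Or.inr (Or.inr (Or.inl rfl)))))))
  have hc2 : φ c₂ = 1 := h d₂⁻¹ b₁⁻¹ _ (hrel _ (show _ ∈ rels from Or.inr (Or.inr (Or.inr (Or.inr (Or.inr (Or.inr (Or.inl rfl))))))))
  have hd2 : φ d₂ = 1 := h c₂⁻¹ b₁ _ (hrel _ (show _ ∈ rels from Or.inr (Or.inr (Or.inr (Or.inr (Or.inr (Or.inr (Or.inr (Or.inl rfl)))))))))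
  have hφ : φ = 1 := by
    apply FreeGroup.ext_hom
    intro i
    fin_cases i
    · exact ha1
    · exact hb1
    · exact ha2
    · exact hb2
    · exact hc1
    · exact hd1
    · exact hc2
    · exact hd2
  intro x
  induction x using QuotientGroup.induction_on with
  | _ y =>
    induction y using QuotientGroup.induction_on with
    | _ w =>
      have : φ w = 1 := by rw [hφ]; rfl
      exact this

end Stmt3
end
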